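/- Let I be a minimal left ideal of (C,*) and let μ ∈ I. Then I = {ν ∈ C : ν*μ = ν}. -/

import Mathlib

open Filter Bornology Topology Pointwise

/-- Fixed point theorem for a single continuous affine self-map of a
nonempty compact convex set in a Hausdorff TVS. -/
theorem exists_fixedPoint_of_affine
    {V : Type*} [AddCommGroup V] [Module ℝ V] [TopologicalSpace V]
    [IsTopologicalAddGroup V] [ContinuousSMul ℝ V] [T2Space V]
    (C : Set V) (hCne : C.Nonempty) (hCcomp : IsCompact C) (hCconv : Convex ℝ C)
    (T : V → V) (hmap : ∀ p ∈ C, T p ∈ C) (hcontT : ContinuousOn T C)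
    (haffT : ∀ a ∈ C, ∀ b ∈ C, ∀ r : ℝ, 0 ≤ r → r ≤ 1 →
      T (r • a + (1 - r) • b) = r • T a + (1 - r) • T b) :
    ∃ ν ∈ C, T ν = ν := by
  obtain ⟨x₀, hx₀⟩ := hCne
  set p : ℕ → V := fun k => T^[k] x₀ with hp_def
  have hp : ∀ k, p k ∈ C := by
    intro k
    induction k with
    | zero => simpa [hp_def] using hx₀
    | succ n ih => simpa [hp_def, Function.iterate_succ_apply'] using hmap _ ih
  have hpsucc : ∀ k, p (k + 1) = T (p k) := by
    intro k; simp [hp_def, Function.iterate_succ_apply']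
  -- Cesàro averages
  set A : ℕ → V := fun n => Nat.rec x₀
    (fun n An => ((n : ℝ) + 2)⁻¹ • p (n + 1) + (1 - ((n : ℝ) + 2)⁻¹) • An) n with hA_def
  have hA0 : A 0 = x₀ := rfl
  have hAsucc : ∀ n, A (n + 1) =
      ((n : ℝ) + 2)⁻¹ • p (n + 1) + (1 - ((n : ℝ) + 2)⁻¹) • A n := fun n => rfl
  have hr0 : ∀ n : ℕ, (0 : ℝ) ≤ ((n : ℝ) + 2)⁻¹ := by intro n; positivity
  have hr1 : ∀ n : ℕ, ((n : ℝ) + 2)⁻¹ ≤ 1 := by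
    intro n
    rw [inv_le_one_iff₀]
    right; linarith [Nat.cast_nonneg (α := ℝ) n]
  have hA : ∀ n, A n ∈ C := by
    intro n
    induction n with
    | zero => simpa [hA0] using hx₀
    | succ n ih =>
      rw [hAsucc]
      exact hCconv (hp (n + 1)) ih (hr0 n) (by linarith [hr1 n]) (by ring)
  have key : ∀ n, T (A n) = A n + ((n : ℝ) + 1)⁻¹ • (p (n + 1) - x₀) := by
    intro n
    induction n with
    | zero => simp [hA0, hpsucc, hp_def]
    | succ n ih =>
      have h2 : ((n : ℝ) + 2) ≠ 0 := by positivity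
      have h1 : ((n : ℝ) + 1) ≠ 0 := by positivity
      rw [hAsucc, haffT _ (hp (n + 1)) _ (hA n) _ (hr0 n) (hr1 n), ← hpsucc, ih]
      have hrr : (1 - ((n : ℝ) + 2)⁻¹) = ((n : ℝ) + 1) * ((n : ℝ) + 2)⁻¹ := by
        field_simp; ring
      push_cast
      rw [hrr]
      match_scalars <;> field_simp <;> ring
  -- Take a cluster point of the averages
  let U : Ultrafilter ℕ := Ultrafilter.of atTop
  have hUle : (U : Filter ℕ) ≤ atTop := Ultrafilter.of_le atTop
  obtain ⟨y, hyC, hy⟩ := hCcomp.ultrafilter_le_nhds (U.map A)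
    (by rw [Ultrafilter.coe_map]
        exact Filter.le_principal_iff.2 (Filter.eventually_map.2 (.of_forall hA)))
  have hy' : Tendsto A (U : Filter ℕ) (𝓝 y) := hy
  have hyW : Tendsto A (U : Filter ℕ) (𝓝[C] y) :=
    tendsto_inf.2 ⟨hy', tendsto_principal.2 (.of_forall hA)⟩
  have hTy : Tendsto (fun n => T (A n)) (U : Filter ℕ) (𝓝 (T y)) :=
    (hcontT y hyC).tendsto.comp hyW
  -- the correction term tends to zero
  letI : UniformSpace V := IsTopologicalAddGroup.rightUniformSpace V
  haveI : IsUniformAddGroup V := isUniformAddGroup_of_addCommGroup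
  have hbdd : IsVonNBounded ℝ (C - C) :=
    (isVonNBounded_sub_of_nonempty ⟨x₀, hx₀⟩ ⟨x₀, hx₀⟩).2
      ⟨hCcomp.totallyBounded.isVonNBounded ℝ, hCcomp.totallyBounded.isVonNBounded ℝ⟩
  have hεt : Tendsto (fun n : ℕ => ((n : ℝ) + 1)⁻¹) atTop (𝓝 0) := by
    simpa [one_div] using tendsto_one_div_add_atTop_nhds_zero_nat (𝕜 := ℝ)
  have h0 : Tendsto (fun n : ℕ => ((n : ℝ) + 1)⁻¹ • (p (n + 1) - x₀)) atTop (𝓝 0) :=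
    hbdd.smul_tendsto_zero (.of_forall fun n => Set.sub_mem_sub (hp (n + 1)) hx₀) hεt
  have h0' : Tendsto (fun n => T (A n)) (U : Filter ℕ) (𝓝 (y + 0)) := by
    simp only [key]
    exact hy'.add (h0.mono_left hUle)
  have := tendsto_nhds_unique hTy h0'
  rw [add_zero] at this
  exact ⟨y, hyC, this⟩

/-- `I` is a left ideal of the semigroup `(C, mul)`: a nonempty subset of `C`
closed under left multiplication by elements of `C`. -/
def IsLeftIdeal {V : Type*} (C : Set V) (mul : V → V → V) (I : Set V) : Prop :=
  I.Nonempty ∧ I ⊆ C ∧ ∀ c ∈ C, ∀ i ∈ I, mul c i ∈ I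

/-- `I` is a minimal left ideal of the semigroup `(C, mul)`. -/
def IsMinimalLeftIdeal {V : Type*} (C : Set V) (mul : V → V → V) (I : Set V) : Prop :=
  IsLeftIdeal C mul I ∧ ∀ J : Set V, IsLeftIdeal C mul J → J ⊆ I → J = I

/-- A minimal left ideal `I` of a compact convex left-continuous affine semigroup
equals the set of elements `ν ∈ C` with `ν * μ = ν`, for any fixed `μ ∈ I`. -/
theorem minimal_left_ideal_eq_fixed_points
    {V : Type*} [AddCommGroup V] [Module ℝ V] [TopologicalSpace V]
    [IsTopologicalAddGroup V] [ContinuousSMul ℝ V] [T2Space V] [LocallyConvexSpace ℝ V]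
    (C : Set V) (hCne : C.Nonempty) (hCcomp : IsCompact C) (hCconv : Convex ℝ C)
    (mul : V → V → V)
    (hclosed : ∀ p ∈ C, ∀ q ∈ C, mul p q ∈ C)
    (hassoc : ∀ p ∈ C, ∀ q ∈ C, ∀ r ∈ C, mul (mul p q) r = mul p (mul q r))
    (hcont : ∀ q ∈ C, ContinuousOn (fun p => mul p q) C)
    (haffl : ∀ q ∈ C, ∀ a ∈ C, ∀ b ∈ C, ∀ r : ℝ, 0 ≤ r → r ≤ 1 →
      mul (r • a + (1 - r) • b) q = r • mul a q + (1 - r) • mul b q)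
    (haffr : ∀ p ∈ C, ∀ a ∈ C, ∀ b ∈ C, ∀ r : ℝ, 0 ≤ r → r ≤ 1 →
      mul p (r • a + (1 - r) • b) = r • mul p a + (1 - r) • mul p b)
    (I : Set V) (hI : IsMinimalLeftIdeal C mul I)
    (μ : V) (hμ : μ ∈ I) :
    I = {ν | ν ∈ C ∧ mul ν μ = ν} := by
  obtain ⟨⟨hIne, hIC, hIdeal⟩, hmin⟩ := hI
  have hμC : μ ∈ C := hIC hμ
  -- fixed point of right multiplication by μ
  obtain ⟨ν₀, hν₀C, hν₀⟩ := exists_fixedPoint_of_affine C hCne hCcomp hCconv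
    (fun p => mul p μ) (fun p hp => hclosed p hp μ hμC) (hcont μ hμC)
    (fun a ha b hb r h0 h1 => haffl μ hμC a ha b hb r h0 h1)
  set J : Set V := {ν | ν ∈ C ∧ mul ν μ = ν} with hJ_def
  have hJI : J ⊆ I := fun ν hν => hν.2 ▸ hIdeal ν hν.1 μ hμ
  have hJideal : IsLeftIdeal C mul J := by
    refine ⟨⟨ν₀, hν₀C, hν₀⟩, fun ν hν => hν.1, fun c hc i hi => ?_⟩
    refine ⟨hclosed c hc i hi.1, ?_⟩
    rw [hassoc c hc i hi.1 μ hμC, hi.2]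
  exact (hmin J hJideal hJI).symm
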